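/- Let q ≥ 1 be an integer and s ∈ (0, 3/2). If s ∈ (1/2, 1), then G_q(s) > 0; if s ∈ (0, 1/2) ∪ (1, 3/2), then G_q(s) < 0; and if s = 1/2 or s = 1, then G_q(s) = 0. -/

import Mathlib

/-- `G_q(s) = (q-1)^(3-2s) - 3 q^(3-2s) + 3 (q+1)^(3-2s) - (q+2)^(3-2s)`,
with the convention `0^(3-2s) = 0` (automatic for `rpow`). -/
noncomputable def GFn (s : ℝ) (q : ℕ) : ℝ :=
  ((q : ℝ) - 1) ^ (3 - 2 * s) - 3 * (q : ℝ) ^ (3 - 2 * s) + 3 * ((q : ℝ) + 1) ^ (3 - 2 * s)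
    - ((q : ℝ) + 2) ^ (3 - 2 * s)

private lemma mvt_unit (f f' : ℝ → ℝ) (a : ℝ)
    (hc : ContinuousOn f (Set.Icc a (a + 1)))
    (hd : ∀ x ∈ Set.Ioo a (a + 1), HasDerivAt f (f' x) x) :
    ∃ c ∈ Set.Ioo a (a + 1), f (a + 1) - f a = f' c := by
  obtain ⟨c, hc1, hc2⟩ := exists_hasDerivAt_eq_slope f f' (by linarith : a < a + 1) hc hd
  refine ⟨c, hc1, ?_⟩
  rw [hc2]
  field_simp
  ring

private lemma key (α : ℝ) (hα : 0 < α) (q : ℕ) (hq : 1 ≤ q) :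
    ∃ η₁ η₂ : ℝ, 0 < η₁ ∧ η₁ < η₂ ∧
      ((q : ℝ) + 2) ^ α - 3 * ((q : ℝ) + 1) ^ α + 3 * (q : ℝ) ^ α - ((q : ℝ) - 1) ^ α
        = α * (α - 1) * (η₂ ^ (α - 2) - η₁ ^ (α - 2)) := by
  have hq1 : (1 : ℝ) ≤ (q : ℝ) := by exact_mod_cast hq
  set a : ℝ := (q : ℝ) - 1 with ha_def
  have ha : 0 ≤ a := by simp [ha_def]; linarith
  -- first MVT on the second difference
  set u : ℝ → ℝ := fun x => (x + 2) ^ α - 2 * (x + 1) ^ α + x ^ α with hu_def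
  have hcont : ∀ c : ℝ, ContinuousOn (fun x : ℝ => (x + c) ^ α) (Set.Icc a (a + 1)) := by
    intro c
    exact ((continuous_id.add continuous_const).rpow_const
      (fun x => Or.inr hα.le)).continuousOn
  have hderiv : ∀ c : ℝ, ∀ x : ℝ, x + c ≠ 0 →
      HasDerivAt (fun x : ℝ => (x + c) ^ α) (α * (x + c) ^ (α - 1)) x := by
    intro c x hx
    have h := (Real.hasDerivAt_rpow_const (x := x + c) (p := α) (Or.inl hx)).comp x
      ((hasDerivAt_id x).add_const c)
    simpa [Function.comp_def] using h
  have hu_cont : ContinuousOn u (Set.Icc a (a + 1)) := by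
    have h0 := hcont 0
    simp only [add_zero] at h0
    exact ((hcont 2).sub ((hcont 1).const_smul (2 : ℝ))).add h0
  have hu_deriv : ∀ x ∈ Set.Ioo a (a + 1),
      HasDerivAt u (α * (x + 2) ^ (α - 1) - 2 * (α * (x + 1) ^ (α - 1))
        + α * x ^ (α - 1)) x := by
    intro x hx
    have hx0 : 0 < x := lt_of_le_of_lt ha hx.1
    have h0 := hderiv 0 x (by simpa using hx0.ne')
    simp only [add_zero] at h0
    exact ((hderiv 2 x (by linarith)).sub ((hderiv 1 x (by linarith)).const_mul 2)).add h0
  obtain ⟨ξ, hξ, hξeq⟩ := mvt_unit u _ a hu_cont hu_deriv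
  have hξ0 : 0 < ξ := lt_of_le_of_lt ha hξ.1
  -- second MVT(s) on x ^ (α - 1)
  have hp_cont : ∀ b : ℝ, 0 < b → ContinuousOn (fun x : ℝ => x ^ (α - 1))
      (Set.Icc b (b + 1)) := by
    intro b hb x hx
    have : (0 : ℝ) < x := lt_of_lt_of_le hb hx.1
    exact (Real.continuousAt_rpow_const x (α - 1) (Or.inl this.ne')).continuousWithinAt
  have hp_deriv : ∀ b : ℝ, 0 < b → ∀ x ∈ Set.Ioo b (b + 1),
      HasDerivAt (fun x : ℝ => x ^ (α - 1)) ((α - 1) * x ^ (α - 1 - 1)) x := by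
    intro b hb x hx
    exact Real.hasDerivAt_rpow_const (Or.inl (lt_trans hb hx.1).ne')
  obtain ⟨η₁, hη₁, hη₁eq⟩ := mvt_unit _ _ ξ (hp_cont ξ hξ0) (hp_deriv ξ hξ0)
  obtain ⟨η₂, hη₂, hη₂eq⟩ := mvt_unit _ _ (ξ + 1) (hp_cont (ξ + 1) (by linarith))
    (hp_deriv (ξ + 1) (by linarith))
  refine ⟨η₁, η₂, lt_trans hξ0 hη₁.1, lt_trans hη₁.2 hη₂.1, ?_⟩
  have h1 : α - 1 - 1 = α - 2 := by ring
  rw [h1] at hη₁eq hη₂eq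
  have hLHS : ((q : ℝ) + 2) ^ α - 3 * ((q : ℝ) + 1) ^ α + 3 * (q : ℝ) ^ α - ((q : ℝ) - 1) ^ α
      = u (a + 1) - u a := by
    have e1 : a + 1 + 2 = (q : ℝ) + 2 := by rw [ha_def]; ring
    have e2 : a + 1 + 1 = (q : ℝ) + 1 := by rw [ha_def]; ring
    have e3 : a + 1 = (q : ℝ) := by rw [ha_def]; ring
    have e4 : a + 2 = (q : ℝ) + 1 := by rw [ha_def]; ring
    simp only [hu_def, e1, e2, e3, e4, ha_def]
    ring
  have e5 : ξ + 1 + 1 = ξ + 2 := by ring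
  rw [e5] at hη₂eq
  rw [hLHS, hξeq]
  -- u' ξ = α * ((ξ+2)^(α-1) - (ξ+1)^(α-1)) - α * ((ξ+1)^(α-1) - ξ^(α-1))
  have : α * (ξ + 2) ^ (α - 1) - 2 * (α * (ξ + 1) ^ (α - 1)) + α * ξ ^ (α - 1)
      = α * (((ξ + 2) ^ (α - 1) - (ξ + 1) ^ (α - 1)) - ((ξ + 1) ^ (α - 1) - ξ ^ (α - 1))) := by
    ring
  rw [this, hη₁eq, hη₂eq]
  ring

theorem stmt11 (q : ℕ) (hq : 1 ≤ q) (s : ℝ) (hs : s ∈ Set.Ioo (0 : ℝ) (3 / 2)) :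
    (s ∈ Set.Ioo (1 / 2 : ℝ) 1 → 0 < GFn s q) ∧
    (s ∈ Set.Ioo (0 : ℝ) (1 / 2) ∪ Set.Ioo (1 : ℝ) (3 / 2) → GFn s q < 0) ∧
    (s = 1 / 2 ∨ s = 1 → GFn s q = 0) := by
  set α : ℝ := 3 - 2 * s with hα_def
  have hα0 : 0 < α := by simp only [hα_def]; linarith [hs.2]
  obtain ⟨η₁, η₂, hη₁, hη₁₂, hE⟩ := key α hα0 q hq
  set d : ℝ := η₂ ^ (α - 2) - η₁ ^ (α - 2) with hd_def
  have hG : GFn s q = -(α * (α - 1) * d) := by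
    unfold GFn
    rw [← hα_def] at *
    linarith [hE]
  refine ⟨?_, ?_, ?_⟩
  · rintro ⟨h1, h2⟩
    have hαm1 : 0 < α - 1 := by simp only [hα_def]; linarith
    have hαm2 : α - 2 < 0 := by simp only [hα_def]; linarith
    have hd : d < 0 := by
      have := Real.rpow_lt_rpow_of_neg hη₁ hη₁₂ hαm2
      simp only [hd_def]; linarith
    rw [hG, neg_pos]
    exact mul_neg_of_pos_of_neg (mul_pos hα0 hαm1) hd
  · rintro (⟨h1, h2⟩ | ⟨h1, h2⟩)
    · have hαm1 : 0 < α - 1 := by simp only [hα_def]; linarith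
      have hαm2 : 0 < α - 2 := by simp only [hα_def]; linarith
      have hd : 0 < d := by
        have := Real.rpow_lt_rpow hη₁.le hη₁₂ hαm2
        simp only [hd_def]; linarith
      rw [hG, Left.neg_neg_iff]
      exact mul_pos (mul_pos hα0 hαm1) hd
    · have hαm1 : α - 1 < 0 := by simp only [hα_def]; linarith
      have hαm2 : α - 2 < 0 := by simp only [hα_def]; linarith
      have hd : d < 0 := by
        have := Real.rpow_lt_rpow_of_neg hη₁ hη₁₂ hαm2
        simp only [hd_def]; linarith
      rw [hG, Left.neg_neg_iff]
      rw [mul_assoc]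
      exact mul_pos hα0 (mul_pos_of_neg_of_neg hαm1 hd)
  · rintro (rfl | rfl)
    · unfold GFn
      have h2 : (3 - 2 * (1 / 2 : ℝ)) = ((2 : ℕ) : ℝ) := by norm_num
      rw [h2, Real.rpow_natCast, Real.rpow_natCast, Real.rpow_natCast, Real.rpow_natCast]
      ring
    · unfold GFn
      norm_num
      ring
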